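/- arXiv:1801.07930 — 8 statements merged into one kernel-verified Lean document; each statement's English description precedes it below -/
import Mathlib

section
/- Let j, i be positive integers with j < i. Then ∂_j(f_{i,j}) = f_{i,j+1}; equivalently, f_{i,j} − s_j(f_{i,j}) = (x_j − x_{j+1}) · f_{i,j+1}. -/
open MvPolynomial Finset

/-- The polynomial `f_{i,j} = Σ_{k=1}^{j} (Π_{ℓ=j+1}^{i} (x_k - x_ℓ)) x_k` in `ℚ[x_1, …]`. -/
noncomputable def fpoly (i j : ℕ) : MvPolynomial ℕ ℚ :=
  ∑ k ∈ Finset.Icc 1 j, (∏ l ∈ Finset.Icc (j + 1) i, (X k - X l)) * X k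

/-- Proposition 2.1 of the paper.  For `1 ≤ j < i`,
`∂_j(f_{i,j}) = f_{i,j+1}`, stated in the equivalent multiplicative form
`f_{i,j} - s_j(f_{i,j}) = (x_j - x_{j+1}) · f_{i,j+1}`,
where `s_j` interchanges the variables `x_j` and `x_{j+1}`. -/
theorem stmt2 (i j : ℕ) (hj : 1 ≤ j) (hji : j < i) :
    fpoly i j - rename (⇑(Equiv.swap j (j + 1))) (fpoly i j)
      = (X j - X (j + 1)) * fpoly i (j + 1) := by
  set σ := Equiv.swap j (j + 1) with hσdef
  have hσ1 : σ j = j + 1 := Equiv.swap_apply_left _ _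
  have hσ2 : σ (j + 1) = j := Equiv.swap_apply_right _ _
  have hσk : ∀ k : ℕ, k ≠ j → k ≠ j + 1 → σ k = k := fun k h1 h2 =>
    Equiv.swap_apply_of_ne_of_ne h1 h2
  have hnotmem : (j + 1) ∉ Finset.Icc (j + 2) i := by simp [Finset.mem_Icc]
  have h2 : Finset.Icc (j + 1) i = insert (j + 1) (Finset.Icc (j + 2) i) := by
    ext x; simp only [Finset.mem_Icc, Finset.mem_insert]; omega
  set P : ℕ → MvPolynomial ℕ ℚ := fun k => ∏ l ∈ Finset.Icc (j + 2) i, (X k - X l) with hP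
  have e1 : fpoly i j = ∑ k ∈ Finset.Icc 1 j, (X k - X (j + 1)) * P k * X k := by
    rw [fpoly]
    refine Finset.sum_congr rfl fun k _ => ?_
    rw [h2, Finset.prod_insert hnotmem, hP]
  have e2 : rename (⇑σ) (fpoly i j)
      = ∑ k ∈ Finset.Icc 1 j, (X (σ k) - X j) * P (σ k) * X (σ k) := by
    rw [fpoly, map_sum]
    refine Finset.sum_congr rfl fun k _ => ?_
    rw [map_mul, map_prod, rename_X, h2, Finset.prod_insert hnotmem]
    simp only [map_sub, rename_X, hσ2, hP]
    have : ∀ l ∈ Finset.Icc (j + 2) i, (X (σ k) - X (σ l) : MvPolynomial ℕ ℚ) = X (σ k) - X l := by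
      intro l hl
      simp only [Finset.mem_Icc] at hl
      rw [hσk l (by omega) (by omega)]
    rw [Finset.prod_congr rfl this]
  have e3 : fpoly i (j + 1) = ∑ k ∈ Finset.Icc 1 (j + 1), P k * X k := rfl
  have hjmem : j ∈ Finset.Icc 1 j := by simp [Finset.mem_Icc]; omega
  rw [e2, e1, ← Finset.sum_sub_distrib, e3,
    Finset.sum_Icc_succ_top (by omega : 1 ≤ j + 1),
    ← Finset.add_sum_erase _ _ hjmem,
    ← Finset.add_sum_erase _ (fun k => P k * X k) hjmem]
  have hsum : ∑ k ∈ (Finset.Icc 1 j).erase j,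
      ((X k - X (j + 1)) * P k * X k - (X (σ k) - X j) * P (σ k) * X (σ k))
      = ∑ k ∈ (Finset.Icc 1 j).erase j, (X j - X (j + 1)) * (P k * X k) := by
    refine Finset.sum_congr rfl fun k hk => ?_
    have hk' := Finset.mem_erase.mp hk
    have hkj : k ≠ j := hk'.1
    have hkj1 : k ≠ j + 1 := by
      have := Finset.mem_Icc.mp hk'.2; omega
    rw [hσk k hkj hkj1]; ring
  rw [hsum, ← Finset.mul_sum, hσ1]
  ring
end

section
/- Let j, i be positive integers with j < i. Then ∂_i(f_{i,j}) = −f_{i−1,j}; equivalently, f_{i,j} − s_i(f_{i,j}) = −(x_i − x_{i+1}) · f_{i−1,j}. -/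
open MvPolynomial Finset

/-- equation (2.5) of the paper.  For `1 ≤ j < i`,
`∂_i(f_{i,j}) = -f_{i-1,j}`, stated in the equivalent multiplicative form
`f_{i,j} - s_i(f_{i,j}) = -(x_i - x_{i+1}) · f_{i-1,j}`,
where `s_i` interchanges the variables `x_i` and `x_{i+1}`. -/
theorem stmt3 (i j : ℕ) (hj : 1 ≤ j) (hji : j < i) :
    fpoly i j - rename (⇑(Equiv.swap i (i + 1))) (fpoly i j)
      = -((X i - X (i + 1)) * fpoly (i - 1) j) := by
  obtain ⟨m, rfl⟩ : ∃ m, i = m + 1 := ⟨i - 1, (Nat.succ_pred_eq_of_pos (by omega)).symm⟩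
  have hjm : j ≤ m := Nat.lt_succ_iff.mp hji
  simp only [Nat.add_sub_cancel, fpoly, map_sum, map_mul, map_prod, map_sub, rename_X]
  have hksw : ∀ k ∈ Finset.Icc 1 j, (Equiv.swap (m + 1) (m + 2)) k = k := by
    intro k hk
    have hk' := (Finset.mem_Icc.mp hk).2
    exact Equiv.swap_apply_of_ne_of_ne (by omega) (by omega)
  have htop : ∀ k : ℕ, (∏ l ∈ Finset.Icc (j + 1) (m + 1), (X l : MvPolynomial ℕ ℚ)) = 0 ∨ True :=
    fun _ => Or.inr trivial
  rw [← Finset.sum_sub_distrib]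
  rw [show (-(((X (m + 1) : MvPolynomial ℕ ℚ) - X (m + 1 + 1)) *
      ∑ k ∈ Finset.Icc 1 j, (∏ l ∈ Finset.Icc (j + 1) m, (X k - X l)) * X k)) =
      ∑ k ∈ Finset.Icc 1 j, -((X (m + 1) - X (m + 1 + 1)) *
        ((∏ l ∈ Finset.Icc (j + 1) m, (X k - X l)) * X k)) by
    rw [Finset.mul_sum, ← Finset.sum_neg_distrib]]
  refine Finset.sum_congr rfl fun k hk => ?_
  rw [hksw k hk]
  have hsplit : ∀ g : ℕ → MvPolynomial ℕ ℚ,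
      (∏ l ∈ Finset.Icc (j + 1) (m + 1), g l) = (∏ l ∈ Finset.Icc (j + 1) m, g l) * g (m + 1) := by
    intro g
    exact Finset.prod_Icc_succ_top (by omega) g
  rw [hsplit, hsplit]
  have hlsw : ∀ l ∈ Finset.Icc (j + 1) m,
      (X k - X ((Equiv.swap (m + 1) (m + 2)) l) : MvPolynomial ℕ ℚ) = X k - X l := by
    intro l hl
    have hl' := (Finset.mem_Icc.mp hl).2
    rw [Equiv.swap_apply_of_ne_of_ne (by omega) (by omega)]
  rw [Finset.prod_congr rfl hlsw]
  rw [Equiv.swap_apply_left]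
  ring
end

section
/- Let n be a positive integer and set F_n := f_{n,1} = (x_1 − x_n)(x_1 − x_{n−1}) ⋯ (x_1 − x_2) x_1. Then for all 1 ≤ j ≤ i ≤ n, f_{i,j} = (−1)^{n−i} (∂_{i+1} ∂_{i+2} ⋯ ∂_n)(∂_{j−1} ∂_{j−2} ⋯ ∂_1)(F_n), where the composed operators are applied rightmost first, i.e., first ∂_1, ∂_2, …, ∂_{j−1} and then ∂_n, ∂_{n−1}, …, ∂_{i+1} (an empty composition is the identity operator). -/
open MvPolynomial Finset
open scoped Classical

/-- The divided difference operator `∂_r(f) = (f - s_r(f))/(x_r - x_{r+1})`, where `s_r`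
interchanges the variables `x_r` and `x_{r+1}`.  It is defined as the (unique, since
`ℚ[x]` is an integral domain and `x_r - x_{r+1} ≠ 0`) polynomial `g` with
`f - s_r(f) = (x_r - x_{r+1}) · g`; such a `g` always exists. -/
noncomputable def ddiff (r : ℕ) (f : MvPolynomial ℕ ℚ) : MvPolynomial ℕ ℚ :=
  if h : ∃ g, f - rename (⇑(Equiv.swap r (r + 1))) f = (X r - X (r + 1)) * g
  then h.choose else 0

/-- The polynomial `F_n = (x_1 - x_n)(x_1 - x_{n-1}) ⋯ (x_1 - x_2) x_1 = f_{n,1}`. -/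
noncomputable def Fpoly (n : ℕ) : MvPolynomial ℕ ℚ :=
  (∏ l ∈ Finset.Icc 2 n, (X 1 - X l)) * X 1

lemma ddiff_spec (r : ℕ) (f g : MvPolynomial ℕ ℚ)
    (h : f - rename (⇑(Equiv.swap r (r + 1))) f = (X r - X (r + 1)) * g) :
    ddiff r f = g := by
  have hex : ∃ g, f - rename (⇑(Equiv.swap r (r + 1))) f = (X r - X (r + 1)) * g := ⟨g, h⟩
  rw [ddiff, dif_pos hex]
  have hspec := hex.choose_spec
  have hx : (X r - X (r+1) : MvPolynomial ℕ ℚ) ≠ 0 := by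
    intro hh
    have h2 := sub_eq_zero.mp hh
    have := MvPolynomial.X_injective h2
    omega
  exact mul_left_cancel₀ hx (hspec.symm.trans h)

lemma stepA (t n : ℕ) (h : t + 2 ≤ n) :
    fpoly n (t+1) - rename (⇑(Equiv.swap (t+1) (t+2))) (fpoly n (t+1))
      = (X (t+1) - X (t+2)) * fpoly n (t+2) := by
  set σ := Equiv.swap (t+1) (t+2) with hσ
  have hσ1 : σ (t+1) = t+2 := Equiv.swap_apply_left _ _
  have hσ2 : σ (t+2) = t+1 := Equiv.swap_apply_right _ _
  have hσk : ∀ k, k ≠ t+1 → k ≠ t+2 → σ k = k := fun k h1 h2 =>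
    Equiv.swap_apply_of_ne_of_ne h1 h2
  set P : ℕ → MvPolynomial ℕ ℚ := fun k => ∏ l ∈ Finset.Icc (t+2+1) n, (X k - X l) with hP
  have hPr : ∀ k, rename (⇑σ) (P k) = P (σ k) := by
    intro k
    rw [hP]
    simp only [map_prod]
    apply Finset.prod_congr rfl
    intro l hl
    rw [Finset.mem_Icc] at hl
    rw [map_sub, rename_X, rename_X, hσk l (by omega) (by omega)]
  have h1 : fpoly n (t+1) = ∑ k ∈ Finset.Icc 1 (t+1), ((X k - X (t+2)) * P k) * X k := by
    unfold fpoly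
    apply Finset.sum_congr rfl
    intro k _
    congr 1
    rw [show Finset.Icc (t+1+1) n = Finset.Ico (t+2) (n+1) from rfl,
      Finset.prod_eq_prod_Ico_succ_bot (by omega)]
    rfl
  have h2 : rename (⇑σ) (fpoly n (t+1))
      = ∑ k ∈ Finset.Icc 1 (t+1), ((X (σ k) - X (t+1)) * P (σ k)) * X (σ k) := by
    rw [h1, map_sum]
    apply Finset.sum_congr rfl
    intro k _
    simp only [map_mul, map_sub, rename_X, hPr, hσ2]
  have h3 : fpoly n (t+2) = (∑ k ∈ Finset.Icc 1 t, P k * X k) + P (t+1) * X (t+1)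
      + P (t+2) * X (t+2) := by
    unfold fpoly
    rw [Finset.sum_Icc_succ_top (by omega : 1 ≤ t+2), Finset.sum_Icc_succ_top (by omega : 1 ≤ t+1)]
  rw [h2, h1, h3,
    Finset.sum_Icc_succ_top (by omega : 1 ≤ t+1), Finset.sum_Icc_succ_top (by omega : 1 ≤ t+1),
    hσ1]
  have h5 : ∑ k ∈ Finset.Icc 1 t, ((X (σ k) - X (t+1)) * P (σ k)) * X (σ k)
      = ∑ k ∈ Finset.Icc 1 t, ((X k - X (t+1)) * P k) * X k := by
    apply Finset.sum_congr rfl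
    intro k hk
    rw [Finset.mem_Icc] at hk
    rw [hσk k (by omega) (by omega)]
  rw [h5]
  have h6 : (∑ k ∈ Finset.Icc 1 t, ((X k - X (t+2)) * P k) * X k)
      - (∑ k ∈ Finset.Icc 1 t, ((X k - X (t+1)) * P k) * X k)
      = (X (t+1) - X (t+2)) * ∑ k ∈ Finset.Icc 1 t, P k * X k := by
    rw [← Finset.sum_sub_distrib, Finset.mul_sum]
    exact Finset.sum_congr rfl (fun k _ => by ring)
  linear_combination h6

lemma stepB (s j : ℕ) (hj : 1 ≤ j) (h : j ≤ s) :
    fpoly (s+1) j - rename (⇑(Equiv.swap (s+1) (s+1+1))) (fpoly (s+1) j)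
      = (X (s+1) - X (s+1+1)) * (- fpoly s j) := by
  unfold fpoly
  rw [map_sum, ← Finset.sum_sub_distrib, neg_eq_neg_one_mul, Finset.mul_sum, Finset.mul_sum]
  apply Finset.sum_congr rfl
  intro k hk
  rw [Finset.mem_Icc] at hk
  rw [map_mul, map_prod, rename_X]
  have hσk : Equiv.swap (s+1) (s+1+1) k = k :=
    Equiv.swap_apply_of_ne_of_ne (by omega) (by omega)
  rw [hσk]
  rw [Finset.prod_Icc_succ_top (by omega : j+1 ≤ s+1),
      Finset.prod_Icc_succ_top (by omega : j+1 ≤ s+1)]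
  rw [map_sub, rename_X, rename_X, hσk, Equiv.swap_apply_left]
  have hc : (∏ l ∈ Finset.Icc (j+1) s, (rename (⇑(Equiv.swap (s+1) (s+1+1)))) (X k - X l))
      = ∏ l ∈ Finset.Icc (j+1) s, (X k - X l : MvPolynomial ℕ ℚ) := by
    apply Finset.prod_congr rfl
    intro l hl
    rw [Finset.mem_Icc] at hl
    rw [map_sub, rename_X, rename_X, hσk,
      Equiv.swap_apply_of_ne_of_ne (by omega) (by omega)]
  rw [hc]
  ring

lemma partA (n : ℕ) : Fpoly n = fpoly n 1 := by
  unfold Fpoly fpoly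
  rw [show Finset.Icc 1 1 = {1} from rfl, Finset.sum_singleton]

lemma fold1 (n t : ℕ) (h : t + 1 ≤ n) :
    ((List.range' 1 t).reverse).foldr ddiff (Fpoly n) = fpoly n (t+1) := by
  induction t with
  | zero => simpa using partA n
  | succ t ih =>
    rw [List.range'_concat, List.reverse_append, List.reverse_singleton, List.singleton_append,
      List.foldr_cons, ih (by omega)]
    rw [show 1+1*t = t+1 from by omega]
    exact ddiff_spec (t+1) _ _ (stepA t n (by omega))

lemma fold2 (j : ℕ) (hj : 1 ≤ j) :
    ∀ d i, j ≤ i →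
      (List.range' (i+1) d).foldr ddiff (fpoly (i+d) j) = (-1)^d * fpoly i j := by
  intro d
  induction d with
  | zero => intro i _; simp
  | succ d ih =>
    intro i hji
    rw [List.range'_succ, List.foldr_cons]
    have hbase : fpoly (i + (d+1)) j = fpoly (i+1+d) j := by
      congr 1
      omega
    rw [hbase, ih (i+1) (by omega)]
    apply ddiff_spec
    have hB := stepB i j hj hji
    have hr : rename (⇑(Equiv.swap (i+1) (i+1+1))) ((-1:MvPolynomial ℕ ℚ)^d * fpoly (i+1) j)
        = (-1)^d * rename (⇑(Equiv.swap (i+1) (i+1+1))) (fpoly (i+1) j) := by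
      rw [map_mul, map_pow, map_neg, map_one]
    rw [hr]
    calc (-1:MvPolynomial ℕ ℚ)^d * fpoly (i+1) j
          - (-1)^d * rename (⇑(Equiv.swap (i+1) (i+1+1))) (fpoly (i+1) j)
        = (-1)^d * (fpoly (i+1) j - rename (⇑(Equiv.swap (i+1) (i+1+1))) (fpoly (i+1) j)) := by
          ring
      _ = (-1)^d * ((X (i+1) - X (i+1+1)) * (- fpoly i j)) := by rw [hB]
      _ = (X (i+1) - X (i+1+1)) * ((-1)^(d+1) * fpoly i j) := by ring

/-- Remark 2.2 of the paper.  For `1 ≤ j ≤ i ≤ n`,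
`f_{i,j} = (-1)^{n-i} (∂_{i+1} ∂_{i+2} ⋯ ∂_n)(∂_{j-1} ∂_{j-2} ⋯ ∂_1)(F_n)`,
the composed operators being applied rightmost first (first `∂_1, …, ∂_{j-1}`,
then `∂_n, ∂_{n-1}, …, ∂_{i+1}`); an empty composition is the identity.
Moreover `F_n = f_{n,1}`. -/
theorem stmt4 (n i j : ℕ) (hj : 1 ≤ j) (hji : j ≤ i) (hin : i ≤ n) :
    Fpoly n = fpoly n 1 ∧
    fpoly i j
      = (-1 : MvPolynomial ℕ ℚ) ^ (n - i) *
          ((List.range' (i + 1) (n - i)).foldr ddiff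
            (((List.range' 1 (j - 1)).reverse).foldr ddiff (Fpoly n))) := by
  refine ⟨partA n, ?_⟩
  have h1 : ((List.range' 1 (j-1)).reverse).foldr ddiff (Fpoly n) = fpoly n j := by
    have := fold1 n (j-1) (by omega)
    rw [show j - 1 + 1 = j from by omega] at this
    exact this
  rw [h1]
  have h2 := fold2 j hj (n - i) i hji
  rw [show i + (n - i) = n from by omega] at h2
  rw [h2, ← mul_assoc, ← pow_add]
  have : (-1 : MvPolynomial ℕ ℚ) ^ (n - i + (n - i)) = 1 :=
    Even.neg_one_pow ⟨n - i, rfl⟩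
  rw [this, one_mul]
end

section
/- Let n > 2, and regard the permutations w_k^{(n−1,1)} as elements of S_n. Then w_1^{(n−1,1)} t_{1,n} = w_1^{(n,1)}, and for each k with 1 ≤ k ≤ n−2, w_k^{(n−1,1)} t_{n−1,n} = w_{k+1}^{(n,1)}. -/
open MvPolynomial Finset

/-- The product of simple transpositions `s_a s_{a-1} ⋯ s_b` (descending indices),
where `s_r` interchanges `r` and `r+1`; the empty product (when `a < b`) is the identity. -/
def sdesc (a b : ℕ) : Equiv.Perm ℕ :=
  (((List.range' b (a + 1 - b)).reverse).map (fun r => Equiv.swap r (r + 1))).prod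

/-- The product of simple transpositions `s_a s_{a+1} ⋯ s_b` (ascending indices);
the empty product (when `b < a`) is the identity. -/
def sasc (a b : ℕ) : Equiv.Perm ℕ :=
  ((List.range' a (b + 1 - a)).map (fun r => Equiv.swap r (r + 1))).prod

/-- The permutation `w_k^{(i,j)} = (s_{i-k} s_{i-k-1} ⋯ s_j)(s_{i-k+1} s_{i-k+2} ⋯ s_{i-1})`,
regarded as a permutation of `ℕ` (supported on `{1, …, n}`). -/
def wkij (i j k : ℕ) : Equiv.Perm ℕ := sdesc (i - k) j * sasc (i - k + 1) (i - 1)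

lemma sasc_nil (a b : ℕ) (h : b + 1 ≤ a) : sasc a b = 1 := by
  unfold sasc
  rw [Nat.sub_eq_zero_of_le h]
  simp

lemma sasc_concat (a b : ℕ) (h : a ≤ b + 1) :
    sasc a (b + 1) = sasc a b * Equiv.swap (b + 1) (b + 2) := by
  unfold sasc
  have h1 : b + 1 + 1 - a = (b + 1 - a) + 1 := by omega
  have h2 : a + 1 * (b + 1 - a) = b + 1 := by omega
  rw [h1, List.range'_concat, h2, List.map_append, List.prod_append]
  simp

lemma sdesc_zero : sdesc 0 1 = 1 := by
  unfold sdesc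
  simp

lemma sdesc_succ (a : ℕ) : sdesc (a + 1) 1 = Equiv.swap (a + 1) (a + 2) * sdesc a 1 := by
  unfold sdesc
  have h1 : a + 1 + 1 - 1 = (a + 1 - 1) + 1 := by omega
  have h2 : 1 + 1 * (a + 1 - 1) = a + 1 := by omega
  rw [h1, List.range'_concat, h2, List.reverse_append, List.map_append, List.prod_append]
  simp

lemma sdesc_apply_one (a : ℕ) : sdesc a 1 1 = a + 1 := by
  induction a with
  | zero => rw [sdesc_zero]; rfl
  | succ a ih =>
    rw [sdesc_succ, Equiv.Perm.mul_apply, ih, Equiv.swap_apply_left]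

lemma sdesc_apply_gt (a m : ℕ) (h : a + 1 < m) : sdesc a 1 m = m := by
  induction a with
  | zero => rw [sdesc_zero]; rfl
  | succ a ih =>
    rw [sdesc_succ, Equiv.Perm.mul_apply, ih (by omega),
      Equiv.swap_apply_of_ne_of_ne (by omega) (by omega)]

/-- permutation identities in the proof of Proposition 3.2.  For `n > 2`:
`w_1^{(n-1,1)} t_{1,n} = w_1^{(n,1)}`, and for `1 ≤ k ≤ n-2`,
`w_k^{(n-1,1)} t_{n-1,n} = w_{k+1}^{(n,1)}`, where `t_{p,q}` is the transposition of
`p` and `q`. -/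
theorem stmt9 (n : ℕ) (hn : 2 < n) :
    wkij (n - 1) 1 1 * Equiv.swap 1 n = wkij n 1 1 ∧
    ∀ k, 1 ≤ k → k ≤ n - 2 →
      wkij (n - 1) 1 k * Equiv.swap (n - 1) n = wkij n 1 (k + 1) := by
  obtain ⟨m, rfl⟩ : ∃ m, n = m + 3 := ⟨n - 3, by omega⟩
  constructor
  · unfold wkij
    have e1 : m + 3 - 1 - 1 = m + 1 := by omega
    have e2 : m + 3 - 1 = m + 2 := by omega
    rw [e1, e2, sasc_nil _ _ (by omega), sasc_nil _ _ (by omega), mul_one, mul_one]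
    conv_rhs => rw [show m + 2 = (m + 1) + 1 from by omega, sdesc_succ]
    rw [Equiv.mul_swap_eq_swap_mul, sdesc_apply_one, sdesc_apply_gt _ _ (by omega),
      show m + 1 + 2 = m + 3 from by omega]
  · intro k hk1 hk2
    unfold wkij
    have a1 : m + 3 - 1 - k = m + 2 - k := by omega
    have a2 : m + 3 - (k + 1) = m + 2 - k := by omega
    have a3 : m + 3 - 1 - k + 1 = m + 3 - k := by omega
    have a4 : m + 3 - (k + 1) + 1 = m + 3 - k := by omega
    have a5 : m + 3 - 1 - 1 = m + 1 := by omega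
    have a6 : m + 3 - 1 = m + 2 := by omega
    rw [a3, a4, a1, a2, a5, a6]
    have hs : sasc (m + 3 - k) (m + 2) =
        sasc (m + 3 - k) (m + 1) * Equiv.swap (m + 2) (m + 3) := by
      rw [show m + 2 = m + 1 + 1 from by omega, sasc_concat _ _ (by omega),
        show m + 1 + 2 = m + 3 from by omega]
    rw [hs, mul_assoc]
end

section
/- Let n > 3, and regard the permutations w_k^{(n−1,1)} as elements of S_n. Then for each k with 1 ≤ k ≤ n−3, w_{k+1}^{(n−1,1)} t_{1,n−k−1} = w_k^{(n−1,1)} t_{n−k−1,n−1}. -/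
open MvPolynomial Finset

lemma sasc_apply : ∀ d a x : ℕ, sasc a (a + d) x =
    if a ≤ x ∧ x ≤ a + d then x + 1 else if x = a + d + 1 then a else x := by
  intro d
  induction d with
  | zero =>
    intro a x
    have h1 : a + 0 + 1 - a = 1 := by omega
    rw [sasc, h1]
    simp only [List.range', List.map_cons, List.map_nil, List.prod_cons, List.prod_nil,
      mul_one, Equiv.swap_apply_def]
    split_ifs <;> omega
  | succ d ih =>
    intro a x
    have h1 : a + (d + 1) + 1 - a = d + 2 := by omega
    rw [sasc, h1, List.range'_succ]
    simp only [List.map_cons, List.prod_cons]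
    have h2 : ((List.range' (a + 1) (d + 1)).map (fun r => Equiv.swap r (r + 1))).prod
        = sasc (a + 1) ((a + 1) + d) := by
      rw [sasc]; congr 3 <;> omega
    rw [h2, Equiv.Perm.mul_apply, ih]
    simp only [Equiv.swap_apply_def]
    split_ifs <;> omega

lemma sasc_apply' (a b x : ℕ) (h : a ≤ b + 1) : sasc a b x =
    if a ≤ x ∧ x ≤ b then x + 1 else if x = b + 1 then a else x := by
  rcases le_or_gt a b with hab | hab
  · obtain ⟨d, rfl⟩ : ∃ d, b = a + d := ⟨b - a, by omega⟩
    exact sasc_apply d a x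
  · have hb : a = b + 1 := by omega
    have h0 : b + 1 - a = 0 := by omega
    rw [sasc, h0]
    simp only [List.range', List.map_nil, List.prod_nil, Equiv.Perm.one_apply]
    split_ifs <;> omega

lemma sdesc_apply : ∀ a x : ℕ, sdesc a 1 x =
    if x = 1 ∧ 1 ≤ a then a + 1 else if 2 ≤ x ∧ x ≤ a + 1 then x - 1 else x := by
  intro a
  induction a with
  | zero =>
    intro x
    rw [sdesc]
    simp only [Nat.zero_add, Nat.sub_self, List.range'_zero, List.range', List.map_nil, List.prod_nil, List.reverse_nil,
      Equiv.Perm.one_apply]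
    split_ifs <;> omega
  | succ a ih =>
    intro x
    have h1 : a + 1 + 1 - 1 = a + 1 := by omega
    rw [sdesc, h1, List.range'_concat]
    simp only [List.reverse_append, List.reverse_cons, List.reverse_nil, List.nil_append,
      List.cons_append, List.map_cons, List.prod_cons]
    have h2 : ((List.range' 1 a).reverse.map (fun r => Equiv.swap r (r + 1))).prod
        = sdesc a 1 := by
      rw [sdesc]; congr 3 <;> omega
    rw [h2, Equiv.Perm.mul_apply, ih]
    simp only [Equiv.swap_apply_def]
    split_ifs <;> omega

set_option maxHeartbeats 2000000 in
/-- permutation identity in the proof of Proposition 3.2.  For `n > 3`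
and `1 ≤ k ≤ n-3`: `w_{k+1}^{(n-1,1)} t_{1,n-k-1} = w_k^{(n-1,1)} t_{n-k-1,n-1}`,
where `t_{p,q}` is the transposition of `p` and `q`. -/
theorem stmt10 (n : ℕ) (hn : 3 < n) :
    ∀ k, 1 ≤ k → k ≤ n - 3 →
      wkij (n - 1) 1 (k + 1) * Equiv.swap 1 (n - k - 1)
        = wkij (n - 1) 1 k * Equiv.swap (n - k - 1) (n - 1) := by
  intro k hk1 hk2
  ext x
  simp only [wkij, Equiv.Perm.mul_apply]
  rw [sdesc_apply, sdesc_apply,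
    sasc_apply' _ _ _ (by omega), sasc_apply' _ _ _ (by omega)]
  simp only [Equiv.swap_apply_def]
  split_ifs <;> omega
end

section
/- Let 2 ≤ j < i ≤ n. Then w_k^{(i,j−1)}(j−1) > w_k^{(i,j−1)}(j) for every k with 1 ≤ k ≤ i−j, and w_{i−j+1}^{(i,j−1)}(j−1) < w_{i−j+1}^{(i,j−1)}(j). -/
open MvPolynomial Finset

lemma sasc_of_gt {a b : ℕ} (h : b < a) : sasc a b = 1 := by
  unfold sasc
  rw [Nat.sub_eq_zero_of_le h]
  simp

lemma sasc_cons {a b : ℕ} (h : a ≤ b) : sasc a b = Equiv.swap a (a + 1) * sasc (a + 1) b := by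
  unfold sasc
  have h1 : b + 1 - a = (b + 1 - (a + 1)) + 1 := by omega
  rw [h1, List.range'_succ]
  simp

lemma sdesc_of_gt {a b : ℕ} (h : a < b) : sdesc a b = 1 := by
  unfold sdesc
  rw [Nat.sub_eq_zero_of_le h]
  simp

lemma sdesc_concat {a b : ℕ} (h : b ≤ a) : sdesc a b = sdesc a (b + 1) * Equiv.swap b (b + 1) := by
  unfold sdesc
  have h1 : a + 1 - b = (a + 1 - (b + 1)) + 1 := by omega
  rw [h1, List.range'_succ]
  simp

lemma sasc_apply_lt : ∀ m a b x, b + 1 - a = m → x < a → sasc a b x = x := by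
  intro m
  induction m with
  | zero => intro a b x hm hx; rw [sasc_of_gt (by omega)]; rfl
  | succ m ih =>
      intro a b x hm hx
      rw [sasc_cons (by omega), Equiv.Perm.mul_apply, ih (a + 1) b x (by omega) (by omega),
        Equiv.swap_apply_of_ne_of_ne (by omega) (by omega)]

lemma sasc_apply_mem : ∀ m a b x, b + 1 - a = m → a ≤ x → x ≤ b → sasc a b x = x + 1 := by
  intro m
  induction m with
  | zero => intro a b x hm ha hb; omega
  | succ m ih =>
      intro a b x hm ha hb
      rw [sasc_cons (by omega), Equiv.Perm.mul_apply]
      rcases eq_or_lt_of_le ha with h | h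
      · subst h
        rw [sasc_apply_lt (b + 1 - (a + 1)) (a + 1) b a rfl (by omega), Equiv.swap_apply_left]
      · rw [ih (a + 1) b x (by omega) (by omega) hb,
          Equiv.swap_apply_of_ne_of_ne (by omega) (by omega)]

lemma sdesc_apply_gt_s11 : ∀ m a b x, a + 1 - b = m → a + 1 < x → sdesc a b x = x := by
  intro m
  induction m with
  | zero => intro a b x hm hx; rw [sdesc_of_gt (by omega)]; rfl
  | succ m ih =>
      intro a b x hm hx
      rw [sdesc_concat (by omega), Equiv.Perm.mul_apply,
        Equiv.swap_apply_of_ne_of_ne (by omega) (by omega), ih a (b + 1) x (by omega) hx]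

lemma sdesc_apply_lt : ∀ m a b x, a + 1 - b = m → x < b → sdesc a b x = x := by
  intro m
  induction m with
  | zero => intro a b x hm hx; rw [sdesc_of_gt (by omega)]; rfl
  | succ m ih =>
      intro a b x hm hx
      rw [sdesc_concat (by omega), Equiv.Perm.mul_apply,
        Equiv.swap_apply_of_ne_of_ne (by omega) (by omega), ih a (b + 1) x (by omega) (by omega)]

lemma sdesc_apply_eq : ∀ m a b, a + 1 - b = m → b ≤ a → sdesc a b b = a + 1 := by
  intro m
  induction m with
  | zero => intro a b hm hb; omega
  | succ m ih =>
      intro a b hm hb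
      rw [sdesc_concat hb, Equiv.Perm.mul_apply, Equiv.swap_apply_left]
      rcases eq_or_lt_of_le hb with h | h
      · subst h
        rw [sdesc_of_gt (Nat.lt_succ_self _)]; rfl
      · rw [ih a (b + 1) (by omega) (by omega)]

lemma sdesc_apply_mid : ∀ m a b x, a + 1 - b = m → b < x → x ≤ a + 1 → sdesc a b x = x - 1 := by
  intro m
  induction m with
  | zero => intro a b x hm h1 h2; omega
  | succ m ih =>
      intro a b x hm h1 h2
      rw [sdesc_concat (by omega), Equiv.Perm.mul_apply]
      rcases eq_or_lt_of_le (Nat.succ_le_of_lt h1) with h | h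
      · rw [← h, Equiv.swap_apply_right,
          sdesc_apply_lt (a + 1 - (b + 1)) a (b + 1) b rfl (by omega)]
        omega
      · rw [Equiv.swap_apply_of_ne_of_ne (by omega) (by omega),
          ih a (b + 1) x (by omega) h h2]

/-- inequalities in the proof of Theorem 1.  For `2 ≤ j < i ≤ n`:
`w_k^{(i,j-1)}(j-1) > w_k^{(i,j-1)}(j)` for `1 ≤ k ≤ i-j`, and
`w_{i-j+1}^{(i,j-1)}(j-1) < w_{i-j+1}^{(i,j-1)}(j)`. -/
theorem stmt11 (n i j : ℕ) (hj : 2 ≤ j) (hji : j < i) (hin : i ≤ n) :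
    (∀ k, 1 ≤ k → k ≤ i - j → wkij i (j - 1) k j < wkij i (j - 1) k (j - 1)) ∧
    wkij i (j - 1) (i - j + 1) (j - 1) < wkij i (j - 1) (i - j + 1) j := by
  constructor
  · intro k hk1 hk2
    have hik : j ≤ i - k := by omega
    unfold wkij
    rw [Equiv.Perm.mul_apply, Equiv.Perm.mul_apply]
    rw [sasc_apply_lt (i - 1 + 1 - (i - k + 1)) (i - k + 1) (i - 1) j rfl (by omega)]
    rw [sasc_apply_lt (i - 1 + 1 - (i - k + 1)) (i - k + 1) (i - 1) (j - 1) rfl (by omega)]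
    rw [sdesc_apply_mid (i - k + 1 - (j - 1)) (i - k) (j - 1) j rfl (by omega) (by omega)]
    rw [sdesc_apply_eq (i - k + 1 - (j - 1)) (i - k) (j - 1) rfl (by omega)]
    omega
  · have h1 : i - (i - j + 1) = j - 1 := by omega
    unfold wkij
    rw [h1, Equiv.Perm.mul_apply, Equiv.Perm.mul_apply]
    have hjj : j - 1 + 1 = j := by omega
    rw [hjj]
    rw [sasc_apply_lt (i - 1 + 1 - j) j (i - 1) (j - 1) rfl (by omega)]
    rw [sasc_apply_mem (i - 1 + 1 - j) j (i - 1) j rfl le_rfl (by omega)]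
    rw [sdesc_apply_eq (j - 1 + 1 - (j - 1)) (j - 1) (j - 1) rfl le_rfl]
    rw [sdesc_apply_gt_s11 (j - 1 + 1 - (j - 1)) (j - 1) (j - 1) (j + 1) rfl (by omega)]
    omega
end

section
/- Let 2 ≤ j < i ≤ n. Then for every k with 1 ≤ k ≤ i−j, one has w_k^{(i,j−1)} s_{j−1} = w_k^{(i,j)} in S_n. -/
open MvPolynomial Finset

lemma sdesc_pred (a b : ℕ) (hb : 1 ≤ b) (hba : b - 1 ≤ a) :
    sdesc a (b - 1) = sdesc a b * Equiv.swap (b - 1) b := by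
  unfold sdesc
  have h1 : a + 1 - (b - 1) = (a + 1 - b) + 1 := by omega
  have h2 : b - 1 + 1 = b := by omega
  rw [h1, List.range'_succ, h2, List.reverse_cons, List.map_append, List.prod_append]
  simp [h2]

lemma swap_commute_sasc (j a b : ℕ) (ha : j + 1 ≤ a) :
    Commute (Equiv.swap (j - 1) j) (sasc a b) := by
  unfold sasc
  apply Commute.list_prod_right
  intro p hp
  simp only [List.mem_map] at hp
  obtain ⟨r, hr, rfl⟩ := hp
  have hra : a ≤ r := (List.mem_range'_1.mp hr).1
  apply Equiv.Perm.Disjoint.commute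
  intro x
  by_cases hx : x = r ∨ x = r + 1
  · left
    rcases hx with rfl | rfl <;> exact Equiv.swap_apply_of_ne_of_ne (by omega) (by omega)
  · right
    push_neg at hx
    exact Equiv.swap_apply_of_ne_of_ne hx.1 hx.2

/-- permutation identity in the proof of Theorem 1.  For
`2 ≤ j < i ≤ n` and `1 ≤ k ≤ i-j`: `w_k^{(i,j-1)} s_{j-1} = w_k^{(i,j)}`,
where `s_{j-1}` is the simple transposition of `j-1` and `j`. -/
theorem stmt12 (n i j : ℕ) (hj : 2 ≤ j) (hji : j < i) (hin : i ≤ n) :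
    ∀ k, 1 ≤ k → k ≤ i - j →
      wkij i (j - 1) k * Equiv.swap (j - 1) j = wkij i j k := by
  intro k hk1 hk2
  unfold wkij
  rw [sdesc_pred (i - k) j (by omega) (by omega)]
  have hc := swap_commute_sasc j (i - k + 1) (i - 1) (by omega)
  rw [mul_assoc (sdesc (i - k) j), hc.eq, ← mul_assoc, mul_assoc _ (Equiv.swap (j-1) j),
    Equiv.swap_mul_self, mul_one]
end

section
/- Let 1 ≤ j < i ≤ n and 1 ≤ k ≤ i−j. Then the length of the permutation w_k^{(i,j)} equals i − j, i.e., the number of pairs (r, s) with r < s and w_k^{(i,j)}(r) > w_k^{(i,j)}(s) is exactly i − j. In particular, the expression (s_{i−k} s_{i−k−1} ⋯ s_j)(s_{i−k+1} s_{i−k+2} ⋯ s_{i−1}) is a reduced expression for w_k^{(i,j)}. -/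
open MvPolynomial Finset

lemma asc_apply (a m x : ℕ) :
    (((List.range' a m).map (fun r => Equiv.swap r (r+1))).prod) x =
      if x = a + m then a else if a ≤ x ∧ x < a + m then x + 1 else x := by
  induction m generalizing x with
  | zero => simp; split_ifs <;> omega
  | succ m ih =>
    rw [List.range'_concat, List.map_append, List.prod_append]
    simp only [List.map_cons, List.map_nil, List.prod_cons, List.prod_nil, mul_one, one_mul,
      Equiv.Perm.mul_apply]
    rw [Equiv.swap_apply_def]
    split_ifs with h1 h2 <;> rw [ih] <;> split_ifs <;> omega

lemma desc_apply (b m x : ℕ) :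
    ((((List.range' b m).reverse).map (fun r => Equiv.swap r (r+1))).prod) x =
      if x = b ∧ 0 < m then b + m else if b < x ∧ x ≤ b + m then x - 1 else x := by
  induction m generalizing x with
  | zero => simp
  | succ m ih =>
    rw [List.range'_concat, List.reverse_append]
    simp only [List.reverse_cons, List.reverse_nil, List.nil_append, List.map_append,
      List.map_cons, List.map_nil, List.prod_append, List.prod_cons, List.prod_nil, mul_one,
      one_mul, List.singleton_append, Equiv.Perm.mul_apply]
    rw [ih, Equiv.swap_apply_def]
    split_ifs <;> omega


lemma wk_apply (i j k x : ℕ) (hj : 1 ≤ j) (hji : j < i) (hk1 : 1 ≤ k) (hk : k ≤ i - j) :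
    wkij i j k x =
      if x = j then i - k + 1
      else if j < x ∧ x ≤ i - k then x - 1
      else if x = i then i - k
      else if i - k + 1 ≤ x ∧ x ≤ i - 1 then x + 1
      else x := by
  rw [wkij, Equiv.Perm.mul_apply, sdesc, sasc, asc_apply, desc_apply]
  have h1 : i - k + 1 + (i - 1 + 1 - (i - k + 1)) = i := by omega
  have h2 : j + (i - k + 1 - j) = i - k + 1 := by omega
  rw [h1, h2]
  split_ifs <;> omega

/-- length of `w_k^{(i,j)}`.  For `1 ≤ j < i ≤ n` and `1 ≤ k ≤ i-j`,
the length of `w_k^{(i,j)}` equals `i - j`: the number of pairs `(r,s)` with `r < s`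
and `w_k^{(i,j)}(r) > w_k^{(i,j)}(s)` is exactly `i - j`.  In particular, since the
defining expression `(s_{i-k} ⋯ s_j)(s_{i-k+1} ⋯ s_{i-1})` consists of exactly
`i - j` simple transpositions, it is a reduced expression for `w_k^{(i,j)}`. -/
theorem stmt14 (n i j k : ℕ) (hj : 1 ≤ j) (hji : j < i) (hin : i ≤ n)
    (hk1 : 1 ≤ k) (hk : k ≤ i - j) :
    ((Finset.Icc 1 n ×ˢ Finset.Icc 1 n).filter
        (fun p => p.1 < p.2 ∧ wkij i j k p.2 < wkij i j k p.1)).card = i - j ∧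
    (i - k + 1 - j) + (i - 1 + 1 - (i - k + 1)) = i - j := by
  constructor
  · have hset : ((Finset.Icc 1 n ×ˢ Finset.Icc 1 n).filter
        (fun p => p.1 < p.2 ∧ wkij i j k p.2 < wkij i j k p.1)) =
        ((Finset.Icc (i - k + 1) (i - 1)).image (fun x => ((x : ℕ), i))) ∪
        ((Finset.Ioc j (i - k)).image (fun x => ((j : ℕ), x))) ∪ {((j : ℕ), i)} := by
      ext ⟨r, s⟩
      simp only [Finset.mem_filter, Finset.mem_product, Finset.mem_Icc, Finset.mem_union,
        Finset.mem_image, Finset.mem_Ioc, Finset.mem_singleton, Prod.mk.injEq, Prod.ext_iff,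
        wk_apply i j k _ hj hji hk1 hk]
      constructor
      · rintro ⟨⟨⟨hr1, hrn⟩, hs1, hsn⟩, hrs, hlt⟩
        have key : (r = j ∧ j < s ∧ s ≤ i - k) ∨ (r = j ∧ s = i) ∨
            (i - k + 1 ≤ r ∧ r ≤ i - 1 ∧ s = i) := by
          split_ifs at hlt <;> omega
        rcases key with ⟨h1, h2, h3⟩ | ⟨h1, h2⟩ | ⟨h1, h2, h3⟩
        · exact Or.inl (Or.inr ⟨s, ⟨h2, h3⟩, h1.symm, rfl⟩)
        · exact Or.inr ⟨h1, h2⟩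
        · exact Or.inl (Or.inl ⟨r, ⟨h1, h2⟩, rfl, h3.symm⟩)
      · rintro ((⟨x, hx, hxr, hxs⟩ | ⟨x, hx, hxr, hxs⟩) | ⟨hr, hs⟩) <;>
          subst_vars <;> refine ⟨by omega, by omega, ?_⟩ <;> split_ifs <;> omega
    rw [hset]
    rw [Finset.card_union_of_disjoint, Finset.card_union_of_disjoint,
      Finset.card_image_of_injective, Finset.card_image_of_injective,
      Nat.card_Icc, Nat.card_Ioc, Finset.card_singleton]
    · omega
    · intro a b hab; simpa using hab
    · intro a b hab; simpa using hab
    · simp only [Finset.disjoint_left, Finset.mem_image, Finset.mem_Icc, Finset.mem_Ioc,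
        Prod.ext_iff]
      rintro ⟨r, s⟩ ⟨x, hx, hxr, hxs⟩ ⟨y, hy, hyr, hys⟩
      omega
    · simp only [Finset.disjoint_left, Finset.mem_union, Finset.mem_image, Finset.mem_Icc,
        Finset.mem_Ioc, Finset.mem_singleton, Prod.ext_iff]
      rintro ⟨r, s⟩ (⟨x, hx, hxr, hxs⟩ | ⟨x, hx, hxr, hxs⟩) ⟨hr, hs⟩ <;> omega
  · omega
end
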